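/- arXiv:1807.01406 — 2 statements merged into one kernel-verified Lean document; each statement's English description precedes it below -/
import Mathlib

section
/- Let f be computed by a linear 2-RNN (h₀, 𝒜, Ω) with n hidden units, and let H^{(l)} ∈ ℝ^{d×⋯×d×p} be its order-(l+1) Hankel tensor defined by H^{(l)}_{i₁,…,i_l,:} = f(e_{i₁},…,e_{i_l}). Then H^{(l)} admits a tensor train decomposition of rank n: H^{(l)} = ⟪𝒜 ×₁ h₀, 𝒜, …, 𝒜, Ωᵀ⟫ with l−1 middle cores equal to 𝒜, i.e., H^{(l)}_{i₁,…,i_l,m} = (𝒜 ×₁ h₀)_{i₁,:} · 𝒜_{:,i₂,:} ⋯ 𝒜_{:,i_l,:} · (Ωᵀ)_{:,m} for all indices. -/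
open Matrix BigOperators

noncomputable section

def rnnStep {n d : ℕ} (A : Fin n → Fin d → Fin n → ℝ) (h : Fin n → ℝ) (x : Fin d → ℝ) :
    Fin n → ℝ := fun j => ∑ i, ∑ σ, A i σ j * h i * x σ

def hState {n d : ℕ} (A : Fin n → Fin d → Fin n → ℝ) (h₀ : Fin n → ℝ)
    (xs : List (Fin d → ℝ)) : Fin n → ℝ := xs.foldl (rnnStep A) h₀

def rnnOut {n d p : ℕ} (h₀ : Fin n → ℝ) (A : Fin n → Fin d → Fin n → ℝ)
    (Ω : Fin p → Fin n → ℝ) (xs : List (Fin d → ℝ)) : Fin p → ℝ :=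
  fun m => ∑ j, Ω m j * hState A h₀ xs j
def oneHot {d : ℕ} (σ : Fin d) : Fin d → ℝ := Pi.single σ 1

def hankel {d p : ℕ} (f : List (Fin d → ℝ) → Fin p → ℝ) (l : ℕ) :
    (Fin l → Fin d) → Fin p → ℝ :=
  fun i m => f (List.ofFn fun t => oneHot (i t)) m

/-- The `σ`-th middle tslice `𝒜_{:,σ,:}` of the transition tensor. -/
def tslice {n d : ℕ} (A : Fin n → Fin d → Fin n → ℝ) (σ : Fin d) :
    Matrix (Fin n) (Fin n) ℝ := fun i j => A i σ j

lemma rnnStep_oneHot {n d : ℕ} (A : Fin n → Fin d → Fin n → ℝ) (h : Fin n → ℝ) (σ : Fin d) :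
    rnnStep A h (oneHot σ) = Matrix.vecMul h (tslice A σ) := by
  funext j
  simp only [rnnStep, oneHot, Matrix.vecMul, dotProduct, tslice]
  refine Finset.sum_congr rfl fun a _ => ?_
  rw [Finset.sum_eq_single σ]
  · simp [mul_comm]
  · intro b _ hb; simp [Pi.single_apply, hb]
  · simp

lemma hState_oneHot {n d : ℕ} (A : Fin n → Fin d → Fin n → ℝ) (h : Fin n → ℝ)
    (L : List (Fin d)) :
    hState A h (L.map oneHot) = Matrix.vecMul h (L.map (tslice A)).prod := by
  induction L generalizing h with
  | nil => simp [hState]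
  | cons σ L ih =>
      simp only [List.map_cons, hState, List.foldl_cons, List.prod_cons]
      rw [show List.foldl (rnnStep A) (rnnStep A h (oneHot σ)) (L.map oneHot)
            = hState A (rnnStep A h (oneHot σ)) (L.map oneHot) from rfl,
        ih, rnnStep_oneHot, Matrix.vecMul_vecMul]

/-- The Hankel tensor of a function computed by a linear 2-RNN `(h₀, 𝒜, Ω)` with `n`
hidden units admits the rank-`n` tensor train decomposition
`H^{(l)} = ⟪𝒜 ×₁ h₀, 𝒜, …, 𝒜, Ωᵀ⟫` (here sequences of length `l+1`, with `l` middle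
cores `𝒜`). -/
theorem hankel_tensor_train {n d p l : ℕ}
    (h₀ : Fin n → ℝ) (A : Fin n → Fin d → Fin n → ℝ) (Ω : Fin p → Fin n → ℝ)
    (f : List (Fin d → ℝ) → Fin p → ℝ) (hf : ∀ xs, f xs = rnnOut h₀ A Ω xs) :
    ∀ (i : Fin (l + 1) → Fin d) (m : Fin p),
      hankel f (l + 1) i m
        = dotProduct
            (Matrix.vecMul (fun j => ∑ a, A a (i 0) j * h₀ a)
              ((List.ofFn fun t : Fin l => tslice A (i t.succ)).prod))
            (fun j => Ω m j) := by
  intro i m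
  have hlist : (List.ofFn fun t : Fin (l + 1) => oneHot (i t))
      = (List.ofFn i).map oneHot := by
    simp [List.map_ofFn]; rfl
  have h1 : (fun j => ∑ a, A a (i 0) j * h₀ a) = Matrix.vecMul h₀ (tslice A (i 0)) := by
    funext j
    simp [Matrix.vecMul, dotProduct, tslice, mul_comm]
  have hcores : List.map (tslice A) (List.ofFn i)
      = tslice A (i 0) :: List.ofFn fun t : Fin l => tslice A (i t.succ) := by
    rw [List.map_ofFn, List.ofFn_succ]; rfl
  rw [hankel, hf, hlist, rnnOut, hState_oneHot, hcores, List.prod_cons,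
    ← Matrix.vecMul_vecMul, ← h1]
  simp [dotProduct, mul_comm]

end
end

section
/- Let f : (ℝᵈ)* → ℝᵖ be computed by a minimal linear 2-RNN (h₀*, 𝒜*, Ω*) with n hidden units. For each l, let H^{(l)} be its Hankel tensor and define P* ∈ ℝ^{d^L × n} and S* ∈ ℝ^{n × d^L p} by (P*)_{(i₁,…,i_L), j} = ((𝒜* ×₁ h₀*)_{i₁,:} 𝒜*_{:,i₂,:}⋯𝒜*_{:,i_L,:})_j and (S*)_{j, (i₁,…,i_L, m)} = (𝒜*_{:,i₁,:}⋯𝒜*_{:,i_L,:} Ω*ᵀ)_{j,m}. Then the reshaping of H^{(2L)} into a d^L × d^L p matrix factorizes as P* S*; the reshaping of H^{(2L+1)} into a d^L × d × d^L p third-order tensor equals 𝒜* ×₁ P* ×₃ (S*)ᵀ; the reshaping of H^{(L)} into a d^L × p matrix equals P* (Ω*)ᵀ; and the vectorization of H^{(L)} in ℝ^{d^L p} equals (S*)ᵀ h₀*. -/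
open Matrix BigOperators

noncomputable section

/-- Product of slice matrices `𝒜_{:,i₁,:} ⋯ 𝒜_{:,i_L,:}`. -/
def prodSlices {n d L : ℕ} (A : Fin n → Fin d → Fin n → ℝ) (u : Fin L → Fin d) :
    Matrix (Fin n) (Fin n) ℝ :=
  (List.ofFn fun t : Fin L => tslice A (u t)).prod

/-- A linear 2-RNN with `n` hidden units computing `f` is minimal if any linear 2-RNN
computing `f` has at least `n` hidden units. -/
def IsMinimal {d p : ℕ} (n : ℕ) (f : List (Fin d → ℝ) → Fin p → ℝ) : Prop :=
  ∀ (n' : ℕ) (h₀' : Fin n' → ℝ) (A' : Fin n' → Fin d → Fin n' → ℝ) (Ω' : Fin p → Fin n' → ℝ),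
    (∀ xs, rnnOut h₀' A' Ω' xs = f xs) → n ≤ n'


lemma hState_map_oneHot {n d : ℕ} (A : Fin n → Fin d → Fin n → ℝ) (h : Fin n → ℝ)
    (ls : List (Fin d)) :
    hState A h (ls.map oneHot) = Matrix.vecMul h ((ls.map (tslice A)).prod) := by
  induction ls generalizing h with
  | nil => simp [hState]
  | cons a t ih =>
      simp only [List.map_cons, hState, List.foldl_cons, List.prod_cons]
      rw [show (List.foldl (rnnStep A) (rnnStep A h (oneHot a)) (t.map oneHot))
            = hState A (rnnStep A h (oneHot a)) (t.map oneHot) from rfl,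
          ih, rnnStep_oneHot, ← Matrix.vecMul_vecMul]

lemma hState_ofFn {n d L : ℕ} (A : Fin n → Fin d → Fin n → ℝ) (h : Fin n → ℝ)
    (u : Fin L → Fin d) :
    hState A h (List.ofFn fun t => oneHot (u t)) = Matrix.vecMul h (prodSlices A u) := by
  have h1 : (List.ofFn fun t => oneHot (u t)) = (List.ofFn u).map oneHot := by
    simp [List.map_ofFn]; rfl
  have h2 : prodSlices A u = ((List.ofFn u).map (tslice A)).prod := by
    simp [prodSlices, List.map_ofFn]; rfl
  rw [h1, h2, hState_map_oneHot]

lemma hState_append {n d : ℕ} (A : Fin n → Fin d → Fin n → ℝ) (h : Fin n → ℝ)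
    (xs ys : List (Fin d → ℝ)) :
    hState A h (xs ++ ys) = hState A (hState A h xs) ys := by
  simp [hState, List.foldl_append]


lemma vecMul_apply' {n k : ℕ} (w : Fin n → ℝ) (M : Matrix (Fin n) (Fin k) ℝ) (x : Fin k) :
    Matrix.vecMul w M x = ∑ y, w y * M y x := by
  simp [Matrix.vecMul, dotProduct]

lemma sum_mul_sum_comm {α β : Type*} [Fintype α] [Fintype β] (f : α → ℝ) (g : β → ℝ)
    (M : β → α → ℝ) :
    ∑ a, f a * ∑ b, g b * M b a = ∑ b, g b * ∑ a, M b a * f a := by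
  simp only [Finset.mul_sum]
  rw [Finset.sum_comm]
  exact Finset.sum_congr rfl fun b _ => Finset.sum_congr rfl fun a _ => by ring

/-- Factorizations of the Hankel tensors of a minimal linear 2-RNN:
`⟨⟨H^{(2L)}⟩⟩_{L,L+1} = P* S*`, `⟨⟨H^{(2L+1)}⟩⟩_{L,1,L+1} = 𝒜* ×₁ P* ×₃ (S*)ᵀ`,
`⟨⟨H^{(L)}⟩⟩_{L,1} = P* (Ω*)ᵀ` and `vec(H^{(L)}) = (S*)ᵀ h₀*`. -/
theorem hankel_factorizations {n d p L : ℕ}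
    (h₀ : Fin n → ℝ) (A : Fin n → Fin d → Fin n → ℝ) (Ω : Fin p → Fin n → ℝ)
    (f : List (Fin d → ℝ) → Fin p → ℝ) (hf : ∀ xs, f xs = rnnOut h₀ A Ω xs)
    (hmin : IsMinimal n f)
    (Pstar : Matrix (Fin L → Fin d) (Fin n) ℝ)
    (hP : ∀ u j, Pstar u j = Matrix.vecMul h₀ (prodSlices A u) j)
    (Sstar : Matrix (Fin n) ((Fin L → Fin d) × Fin p) ℝ)
    (hS : ∀ j v m, Sstar j (v, m) = ∑ b, prodSlices A v j b * Ω m b) :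
    (∀ (u v : Fin L → Fin d) (m : Fin p),
      f ((List.ofFn fun t => oneHot (u t)) ++ (List.ofFn fun t => oneHot (v t))) m
        = ∑ j, Pstar u j * Sstar j (v, m))
    ∧ (∀ (u : Fin L → Fin d) (σ : Fin d) (v : Fin L → Fin d) (m : Fin p),
      f ((List.ofFn fun t => oneHot (u t)) ++ [oneHot σ] ++ (List.ofFn fun t => oneHot (v t))) m
        = ∑ a, ∑ b, Pstar u a * A a σ b * Sstar b (v, m))
    ∧ (∀ (u : Fin L → Fin d) (m : Fin p),
      f (List.ofFn fun t => oneHot (u t)) m = ∑ a, Pstar u a * Ω m a)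
    ∧ (∀ (u : Fin L → Fin d) (m : Fin p),
      f (List.ofFn fun t => oneHot (u t)) m = ∑ a, Sstar a (u, m) * h₀ a) := by
  have hP' : ∀ u j, (∑ z, h₀ z * prodSlices A u z j) = Pstar u j := by
    intro u j; rw [hP, vecMul_apply']
  have hS' : ∀ j v m, (∑ b, prodSlices A v j b * Ω m b) = Sstar j (v, m) := by
    intro j v m; rw [hS]
  refine ⟨?_, ?_, ?_, ?_⟩
  · intro u v m
    rw [hf]
    simp only [rnnOut, hState_append, hState_ofFn, vecMul_apply', hP']
    rw [sum_mul_sum_comm (Ω m) (Pstar u) (fun y x => prodSlices A v y x)]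
    exact Finset.sum_congr rfl fun y _ => by rw [hS']
  · intro u σ v m
    rw [hf]
    simp only [rnnOut]
    rw [show (List.ofFn fun t => oneHot (u t)) ++ [oneHot σ] ++ (List.ofFn fun t => oneHot (v t))
          = (List.ofFn fun t => oneHot (u t)) ++ ([oneHot σ] ++ (List.ofFn fun t => oneHot (v t)))
        from by simp [List.append_assoc]]
    simp only [hState_append, hState_ofFn]
    have hmid : hState A (Matrix.vecMul h₀ (prodSlices A u)) [oneHot σ]
        = Matrix.vecMul (Matrix.vecMul h₀ (prodSlices A u)) (tslice A σ) := by
      simp [hState, rnnStep_oneHot]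
    rw [hmid]
    simp only [vecMul_apply', hP', tslice]
    rw [sum_mul_sum_comm (Ω m) (fun y => ∑ z, Pstar u z * A z σ y)
        (fun y x => prodSlices A v y x)]
    have : ∀ y, (∑ z, Pstar u z * A z σ y) * (∑ x, prodSlices A v y x * Ω m x)
        = ∑ z, Pstar u z * A z σ y * Sstar y (v, m) := by
      intro y; rw [hS', Finset.sum_mul]
    simp only [this]
    rw [Finset.sum_comm]
  · intro u m
    rw [hf]
    simp only [rnnOut, hState_ofFn, vecMul_apply', hP']
    exact Finset.sum_congr rfl fun a _ => by ring
  · intro u m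
    rw [hf]
    simp only [rnnOut, hState_ofFn, vecMul_apply']
    rw [sum_mul_sum_comm (Ω m) h₀ (fun z x => prodSlices A u z x)]
    exact Finset.sum_congr rfl fun a _ => by rw [hS']; ring


end
end
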